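/- For a tripartite pure state |ψ⟩ on H_R ⊗ H_A ⊗ H_B with reduced state ψ^R = 𝟙/D maximally mixed, if the majorization (𝟙_K/K) ⊗ ψ^B ≺ (𝟙_L/L) ⊗ ψ^{AB} holds between the indicated positive semidefinite operators, then log₂K − log₂L ≥ log₂(λ₀^B · D), where λ₀^B is the largest eigenvalue of ψ^B. -/

import Mathlib

open Matrix Kronecker Finset
open scoped ComplexConjugate Classical ComplexOrder

noncomputable section

/-- Density matrix (outer product) of a vector. -/
def dmv {n : Type*} (v : n → ℂ) : Matrix n n ℂ :=
  Matrix.of fun i j => v i * conj (v j)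

/-- Outer product `|u⟩⟨v|`. -/
def outer {n : Type*} (u v : n → ℂ) : Matrix n n ℂ :=
  Matrix.of fun i j => u i * conj (v j)

/-- Largest eigenvalue of a (Hermitian) matrix. -/
def maxEig {n : Type*} [Fintype n] [DecidableEq n] (A : Matrix n n ℂ) : ℝ :=
  if h : A.IsHermitian then ⨆ i, h.eigenvalues i else 0

/-- Sum of the `k` largest eigenvalues of a Hermitian matrix. -/
def topSum {n : Type*} [Fintype n] [DecidableEq n] (A : Matrix n n ℂ) (k : ℕ) : ℝ :=
  if h : A.IsHermitian then
    sSup {x : ℝ | ∃ s : Finset n, s.card = k ∧ x = ∑ i ∈ s, h.eigenvalues i}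
  else 0

/-- Majorization of Hermitian operators: `A ≺ B` (possibly on different spaces):
every partial sum of the `k` largest eigenvalues of `A` is at most that of `B`,
and the traces agree. -/
def Maj {m n : Type*} [Fintype m] [DecidableEq m] [Fintype n] [DecidableEq n]
    (A : Matrix m m ℂ) (B : Matrix n n ℂ) : Prop :=
  (∀ k : ℕ, topSum A k ≤ topSum B k) ∧ A.trace = B.trace

/-- Total matrix square root: the positive square root for PSD matrices, `0` otherwise. -/
def msqrt {n : Type*} [Fintype n] [DecidableEq n] (A : Matrix n n ℂ) : Matrix n n ℂ :=
  if h : A.PosSemidef then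
    (h.1.eigenvectorUnitary : Matrix n n ℂ) *
      diagonal ((↑) ∘ (√·) ∘ h.1.eigenvalues) * (star h.1.eigenvectorUnitary : Matrix n n ℂ)
  else 0

/-- Trace norm (sum of singular values). -/
def traceNorm {n : Type*} [Fintype n] [DecidableEq n] (A : Matrix n n ℂ) : ℝ :=
  ((msqrt (Aᴴ * A)).trace).re

/-- Fidelity `F(ρ,σ) = ‖√ρ √σ‖₁`. -/
def fid {n : Type*} [Fintype n] [DecidableEq n] (ρ σ : Matrix n n ℂ) : ℝ :=
  traceNorm (msqrt ρ * msqrt σ)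

/-- Purified distance `P(ρ,σ) = √(1 − F²(ρ,σ))`. -/
def pd {n : Type*} [Fintype n] [DecidableEq n] (ρ σ : Matrix n n ℂ) : ℝ :=
  Real.sqrt (1 - fid ρ σ ^ 2)

/-- Choi matrix of a map on matrices. -/
def choi {m n : Type*} [Fintype m] [DecidableEq m]
    (N : Matrix m m ℂ → Matrix n n ℂ) : Matrix (m × n) (m × n) ℂ :=
  Matrix.of fun p q => N (Matrix.single p.1 q.1 1) p.2 q.2

/-- A map is mixed-unitary if it is a convex combination of unitary conjugations. -/
def IsMixedUnitary {n : Type*} [Fintype n] [DecidableEq n]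
    (N : Matrix n n ℂ → Matrix n n ℂ) : Prop :=
  ∃ (m : ℕ) (p : Fin m → ℝ) (U : Fin m → Matrix n n ℂ),
    (∀ i, 0 ≤ p i) ∧ (∑ i, p i = 1) ∧ (∀ i, U i ∈ Matrix.unitaryGroup n ℂ) ∧
    ∀ ρ, N ρ = ∑ i, (p i : ℂ) • (U i * ρ * (U i)ᴴ)

/-- `id_R ⊗ M` acting blockwise on a matrix on `R × S`. -/
def idTensor {R S T : Type*} (M : Matrix S S ℂ →ₗ[ℂ] Matrix T T ℂ)
    (ρ : Matrix (R × S) (R × S) ℂ) : Matrix (R × T) (R × T) ℂ :=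
  Matrix.of fun p q => M (Matrix.of fun s s' => ρ (p.1, s) (q.1, s')) p.2 q.2

end

section Aux
lemma maxEig_eq {n : Type*} [Fintype n] [DecidableEq n] {A : Matrix n n ℂ}
    (hA : A.IsHermitian) : maxEig A = ⨆ i, hA.eigenvalues i := by
  rw [maxEig, dif_pos hA]

lemma eig_le_maxEig {n : Type*} [Fintype n] [DecidableEq n] [Nonempty n] {A : Matrix n n ℂ}
    (hA : A.IsHermitian) (i : n) : hA.eigenvalues i ≤ maxEig A := by
  rw [maxEig_eq hA]
  exact le_ciSup (Set.Finite.bddAbove (Set.finite_range _)) i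

lemma quad_le_maxEig {n : Type*} [Fintype n] [DecidableEq n] [Nonempty n] {A : Matrix n n ℂ}
    (hA : A.IsHermitian) (x : n → ℂ) :
    (star x ⬝ᵥ (A *ᵥ x)).re ≤ maxEig A * (star x ⬝ᵥ x).re := by
  set U : Matrix n n ℂ := (Matrix.IsHermitian.eigenvectorUnitary hA : Matrix n n ℂ) with hUdef
  have hU1 : U * star U = 1 := (mem_unitaryGroup_iff).mp (Matrix.IsHermitian.eigenvectorUnitary hA).2
  have hU2 : star U * U = 1 := (mem_unitaryGroup_iff').mp (Matrix.IsHermitian.eigenvectorUnitary hA).2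
  set y : n → ℂ := star U *ᵥ x with hy
  have hvm : vecMul (star x) U = star y := by
    rw [hy, star_mulVec, star_eq_conjTranspose, conjTranspose_conjTranspose]
  have hyy : star y ⬝ᵥ y = star x ⬝ᵥ x := by
    have hUy : U *ᵥ y = x := by
      rw [hy, mulVec_mulVec, hU1, one_mulVec]
    calc star y ⬝ᵥ y = vecMul (star x) U ⬝ᵥ y := by rw [hvm]
    _ = star x ⬝ᵥ (U *ᵥ y) := (dotProduct_mulVec _ _ _).symm
    _ = star x ⬝ᵥ x := by rw [hUy]
  have hquad : star x ⬝ᵥ (A *ᵥ x)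
      = ∑ i, (hA.eigenvalues i : ℂ) * (Complex.normSq (y i) : ℂ) := by
    conv_lhs => rw [hA.spectral_theorem]
    rw [Unitary.conjStarAlgAut_apply, ← hUdef, Matrix.mul_assoc, ← mulVec_mulVec, dotProduct_mulVec, hvm, ← mulVec_mulVec]
    simp only [dotProduct, mulVec_diagonal, Function.comp_apply, Pi.star_apply]
    refine Finset.sum_congr rfl fun i _ => ?_
    have h0 : (starRingEnd ℂ) (y i) * y i = (Complex.normSq (y i) : ℂ) :=
      (Complex.normSq_eq_conj_mul_self).symm
    simp only [Complex.star_def]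
    show (starRingEnd ℂ) (y i) * ((hA.eigenvalues i : ℂ) * y i) = _
    rw [mul_left_comm, h0]
  have hre : (star x ⬝ᵥ (A *ᵥ x)).re = ∑ i, hA.eigenvalues i * Complex.normSq (y i) := by
    rw [hquad, Complex.re_sum]
    refine Finset.sum_congr rfl fun i _ => ?_
    norm_cast
  have hre2 : (star x ⬝ᵥ x).re = ∑ i, Complex.normSq (y i) := by
    rw [← hyy]
    simp only [dotProduct, Complex.re_sum, Pi.star_apply]
    refine Finset.sum_congr rfl fun i _ => ?_
    simp only [Complex.star_def]
    rw [← Complex.normSq_eq_conj_mul_self]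
    norm_cast
  rw [hre, hre2, Finset.mul_sum]
  refine Finset.sum_le_sum fun i _ => ?_
  exact mul_le_mul_of_nonneg_right (eig_le_maxEig hA i) (Complex.normSq_nonneg _)

lemma quadN_le {Rt P : Type*} [Fintype Rt] [Fintype P] (f : Rt → P → ℂ) (D : ℕ)
    (hD : 0 < D)
    (hmix : ∀ r r' : Rt, ∑ q, f r q * conj (f r' q) = if r = r' then (D:ℂ)⁻¹ else 0)
    (v : P → ℂ) :
    (star v ⬝ᵥ ((Matrix.of fun p q : P => ∑ r, f r p * conj (f r q)) *ᵥ v)).re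
      ≤ (D:ℝ)⁻¹ * (star v ⬝ᵥ v).re := by
  set g : Rt → ℂ := fun r => ∑ q, conj (f r q) * v q with hg
  set c : P → ℂ := fun q => ∑ r, conj (g r) * conj (f r q) with hc
  set S : ℝ := ∑ r, Complex.normSq (g r) with hS
  set V : ℝ := ∑ p, Complex.normSq (v p) with hV
  have hS0 : 0 ≤ S := Finset.sum_nonneg fun r _ => Complex.normSq_nonneg _
  have hV0 : 0 ≤ V := Finset.sum_nonneg fun p _ => Complex.normSq_nonneg _
  have hSc : ((S : ℝ) : ℂ) = ∑ r, conj (g r) * g r := by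
    rw [hS]; push_cast
    exact Finset.sum_congr rfl fun r _ => Complex.normSq_eq_conj_mul_self
  -- LHS = S
  have hLHS : (star v ⬝ᵥ ((Matrix.of fun p q : P => ∑ r, f r p * conj (f r q)) *ᵥ v)) = (S : ℂ) := by
    have e1 : star v ⬝ᵥ ((Matrix.of fun p q : P => ∑ r, f r p * conj (f r q)) *ᵥ v)
        = ∑ p, ∑ r, ∑ q, (f r p * conj (v p)) * (conj (f r q) * v q) := by
      simp only [dotProduct, mulVec, of_apply, Pi.star_apply, Complex.star_def,
        Finset.sum_mul, Finset.mul_sum]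
      refine Finset.sum_congr rfl fun p _ => ?_
      rw [Finset.sum_comm]
      exact Finset.sum_congr rfl fun r _ => Finset.sum_congr rfl fun q _ => by ring
    rw [e1, Finset.sum_comm, hSc]
    refine Finset.sum_congr rfl fun r _ => ?_
    have : conj (g r) = ∑ p, f r p * conj (v p) := by
      rw [hg]; simp only [map_sum, _root_.map_mul, Complex.conj_conj]
    rw [this, hg, Finset.sum_mul_sum]
  -- ∑ normSq (c q) = D⁻¹ * S
  have hcS : ∑ q, Complex.normSq (c q) = (D:ℝ)⁻¹ * S := by
    have e3 : ((∑ q, Complex.normSq (c q) : ℝ) : ℂ) = ∑ q, conj (c q) * c q := by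
      push_cast
      exact Finset.sum_congr rfl fun q _ => Complex.normSq_eq_conj_mul_self
    have e5 : ∀ q : P, conj (c q) * c q
        = ∑ r, ∑ r', (g r * f r q) * (conj (g r') * conj (f r' q)) := by
      intro q
      have : conj (c q) = ∑ r, g r * f r q := by
        rw [hc]; simp only [map_sum, _root_.map_mul, Complex.conj_conj]
      rw [this, hc, Finset.sum_mul_sum]
    have e4 : ∑ q, conj (c q) * c q = (D:ℂ)⁻¹ * ∑ r, conj (g r) * g r := by
      rw [Finset.sum_congr rfl fun q _ => e5 q, Finset.sum_comm]
      have e6 : ∀ r : Rt, ∑ q, ∑ r', (g r * f r q) * (conj (g r') * conj (f r' q))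
          = (D:ℂ)⁻¹ * (conj (g r) * g r) := by
        intro r
        rw [Finset.sum_comm]
        have e7 : ∀ r' : Rt, ∑ q, (g r * f r q) * (conj (g r') * conj (f r' q))
            = (g r * conj (g r')) * (if r = r' then (D:ℂ)⁻¹ else 0) := by
          intro r'
          rw [← hmix r r', Finset.mul_sum]
          exact Finset.sum_congr rfl fun q _ => by ring
        rw [Finset.sum_congr rfl fun r' _ => e7 r']
        simp only [mul_ite, mul_zero, Finset.sum_ite_eq, Finset.mem_univ, if_true]
        ring
      rw [Finset.sum_congr rfl fun r _ => e6 r, ← Finset.mul_sum]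
    have := e3.trans e4
    rw [← hSc] at this
    have h2 : ((∑ q, Complex.normSq (c q) : ℝ) : ℂ) = (((D:ℝ)⁻¹ * S : ℝ) : ℂ) := by
      rw [this]; push_cast; ring
    exact_mod_cast h2
  -- S as a single sum over q
  have hSc2 : ((S:ℝ) : ℂ) = ∑ q, c q * v q := by
    rw [hSc]
    have : ∀ r : Rt, conj (g r) * g r = ∑ q, (conj (g r) * conj (f r q)) * v q := by
      intro r
      conv_lhs => rw [hg]
      rw [Finset.mul_sum]
      exact Finset.sum_congr rfl fun q _ => by ring
    rw [Finset.sum_congr rfl fun r _ => this r, Finset.sum_comm, hc]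
    exact Finset.sum_congr rfl fun q _ => by rw [Finset.sum_mul]
  have habs : S ≤ ∑ q, ‖c q‖ * ‖v q‖ := by
    calc S = ‖((S:ℝ):ℂ)‖ := by simp [abs_of_nonneg hS0]
    _ = ‖∑ q, c q * v q‖ := by rw [hSc2]
    _ ≤ ∑ q, ‖c q * v q‖ := norm_sum_le _ _
    _ = ∑ q, ‖c q‖ * ‖v q‖ := by
        exact Finset.sum_congr rfl fun q _ => norm_mul _ _
  have hCS : (∑ q, ‖c q‖ * ‖v q‖) ^ 2
      ≤ ((D:ℝ)⁻¹ * S) * V := by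
    have := Finset.sum_mul_sq_le_sq_mul_sq Finset.univ (fun q => ‖c q‖)
      (fun q => ‖v q‖)
    simpa only [Complex.sq_norm, ← hcS, hV] using this
  have hfin : S ^ 2 ≤ ((D:ℝ)⁻¹ * V) * S := by
    have h1 : S ^ 2 ≤ (∑ q, ‖c q‖ * ‖v q‖) ^ 2 :=
      pow_le_pow_left₀ hS0 habs 2
    calc S ^ 2 ≤ ((D:ℝ)⁻¹ * S) * V := h1.trans hCS
    _ = ((D:ℝ)⁻¹ * V) * S := by ring
  have hmain : S ≤ (D:ℝ)⁻¹ * V := by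
    rcases hS0.lt_or_eq with h | h
    · have : S * S ≤ ((D:ℝ)⁻¹ * V) * S := by nlinarith [hfin]
      exact le_of_mul_le_mul_right this h
    · rw [← h]; positivity
  have hVre : (star v ⬝ᵥ v).re = V := by
    simp only [dotProduct, Pi.star_apply, Complex.star_def, Complex.re_sum, hV]
    exact Finset.sum_congr rfl fun p _ => by
      rw [← Complex.normSq_eq_conj_mul_self]; norm_cast
  rw [hLHS, hVre, Complex.ofReal_re]
  exact hmain

lemma topSum_one_ge {n : Type*} [Fintype n] [DecidableEq n] {A : Matrix n n ℂ}
    (hA : A.IsHermitian) (i : n) : hA.eigenvalues i ≤ topSum A 1 := by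
  rw [topSum, dif_pos hA]
  apply le_csSup
  · refine Set.Finite.bddAbove (Set.Finite.subset
      (Set.finite_range (fun s : Finset n => ∑ j ∈ s, hA.eigenvalues j)) ?_)
    rintro x ⟨s, _, rfl⟩; exact ⟨s, rfl⟩
  · exact ⟨{i}, Finset.card_singleton i, (Finset.sum_singleton _ _).symm⟩

lemma topSum_one_le {n : Type*} [Fintype n] [DecidableEq n] [Nonempty n] {A : Matrix n n ℂ}
    (hA : A.IsHermitian) {c : ℝ} (h : ∀ i, hA.eigenvalues i ≤ c) : topSum A 1 ≤ c := by
  rw [topSum, dif_pos hA]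
  apply csSup_le
  · exact ⟨_, ⟨{Classical.arbitrary n}, Finset.card_singleton _, rfl⟩⟩
  · rintro x ⟨s, hs, rfl⟩
    obtain ⟨i, rfl⟩ := Finset.card_eq_one.mp hs
    rw [Finset.sum_singleton]; exact h i

lemma maxEig_le_topSum {n : Type*} [Fintype n] [DecidableEq n] [Nonempty n] {A : Matrix n n ℂ}
    (hA : A.IsHermitian) : maxEig A ≤ topSum A 1 := by
  rw [maxEig_eq hA]
  exact ciSup_le fun i => topSum_one_ge hA i

lemma sum_eig_eq_trace_re {n : Type*} [Fintype n] [DecidableEq n] {A : Matrix n n ℂ}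
    (hA : A.IsHermitian) : ∑ i, hA.eigenvalues i = A.trace.re := by
  have h1 : A.trace = ∑ i, (hA.eigenvalues i : ℂ) := by
    conv_lhs => rw [hA.spectral_theorem]
    rw [Unitary.conjStarAlgAut_apply, Matrix.trace_mul_comm, ← Matrix.mul_assoc,
      (Matrix.mem_unitaryGroup_iff').mp (Matrix.IsHermitian.eigenvectorUnitary hA).2, Matrix.one_mul,
      Matrix.trace_diagonal]
    rfl
  rw [h1, Complex.re_sum]
  exact Finset.sum_congr rfl fun i _ => by norm_cast

lemma kron_herm {J P : Type*} [Fintype J] [Fintype P] [DecidableEq J] [DecidableEq P]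
    {c : ℂ} (hc : conj c = c) {N : Matrix P P ℂ} (hN : N.IsHermitian) :
    ((c • (1 : Matrix J J ℂ)) ⊗ₖ N).IsHermitian := by
  ext ⟨j, p⟩ ⟨j', q⟩
  simp only [conjTranspose_apply, kroneckerMap_apply, Matrix.smul_apply, Matrix.one_apply,
    smul_eq_mul, star_mul', Complex.star_def, _root_.map_mul]
  have h1 : star (N q p) = N p q := by
    conv_rhs => rw [← hN]
    rw [Matrix.conjTranspose_apply]
  rw [show (starRingEnd ℂ) (N q p) = star (N q p) from rfl, h1]
  have h2 : (starRingEnd ℂ) (if j' = j then (1:ℂ) else 0) = if j = j' then (1:ℂ) else 0 := by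
    by_cases h : j = j' <;> simp [h, eq_comm]
  rw [h2, hc]

lemma kron_quad {J P : Type*} [Fintype J] [Fintype P] [DecidableEq J]
    (c : ℂ) (N : Matrix P P ℂ) (x : J × P → ℂ) :
    star x ⬝ᵥ (((c • (1 : Matrix J J ℂ)) ⊗ₖ N) *ᵥ x)
      = c * ∑ j, (star (fun p => x (j, p)) ⬝ᵥ (N *ᵥ (fun p => x (j, p)))) := by
  have inner : ∀ (j : J) (p : P),
      (∑ j', ∑ q, (c * (if j = j' then (1:ℂ) else 0) * N p q) * x (j', q))
        = c * ∑ q, N p q * x (j, q) := by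
    intro j p
    have h1 : ∀ j', (∑ q, (c * (if j = j' then (1:ℂ) else 0) * N p q) * x (j', q))
        = if j = j' then ∑ q, c * (N p q * x (j', q)) else 0 := by
      intro j'
      by_cases h : j = j'
      · simp only [h, if_true, mul_one]
        exact Finset.sum_congr rfl fun q _ => by ring
      · simp [h]
    rw [Finset.sum_congr rfl fun j' _ => h1 j', Finset.sum_ite_eq, if_pos (Finset.mem_univ j),
      ← Finset.mul_sum]
  calc star x ⬝ᵥ (((c • (1 : Matrix J J ℂ)) ⊗ₖ N) *ᵥ x)
      = ∑ j, ∑ p, star (x (j, p)) *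
          (∑ j', ∑ q, (c * (if j = j' then (1:ℂ) else 0) * N p q) * x (j', q)) := by
        simp only [dotProduct, Matrix.mulVec, kroneckerMap_apply, Matrix.smul_apply,
          Matrix.one_apply, smul_eq_mul, Fintype.sum_prod_type, Pi.star_apply]
    _ = ∑ j, ∑ p, star (x (j, p)) * (c * ∑ q, N p q * x (j, q)) := by
        exact Finset.sum_congr rfl fun j _ => Finset.sum_congr rfl fun p _ => by rw [inner j p]
    _ = c * ∑ j, (star (fun p => x (j, p)) ⬝ᵥ (N *ᵥ (fun p => x (j, p)))) := by
        simp only [dotProduct, Matrix.mulVec, Pi.star_apply, Finset.mul_sum]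
        exact Finset.sum_congr rfl fun j _ => Finset.sum_congr rfl fun p _ =>
          Finset.sum_congr rfl fun q _ => by ring

lemma dot_split {J P : Type*} [Fintype J] [Fintype P] (x : J × P → ℂ) :
    star x ⬝ᵥ x = ∑ j, (star (fun p => x (j, p)) ⬝ᵥ (fun p => x (j, p))) := by
  simp [dotProduct, Fintype.sum_prod_type]

end Aux

/-- converse bound from majorization for a tripartite pure state with
maximally mixed reduced state on `R`. -/
theorem stmt0 {Rt At Bt : Type*} [Fintype Rt] [Fintype At] [Fintype Bt]
    [DecidableEq Rt] [DecidableEq At] [DecidableEq Bt] [Nonempty Bt]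
    (ψ : Rt × At × Bt → ℂ)
    (hunit : ∑ x, ‖ψ x‖ ^ 2 = 1)
    (D : ℕ) (hD : D = Fintype.card Rt) (hDpos : 0 < D)
    (hmix : (Matrix.of fun r r' : Rt => ∑ a, ∑ b, ψ (r, a, b) * conj (ψ (r', a, b)))
      = (D : ℂ)⁻¹ • (1 : Matrix Rt Rt ℂ))
    (K L : ℕ) (hK : 0 < K) (hL : 0 < L)
    (hmaj : Maj
      ((((K : ℂ)⁻¹ • (1 : Matrix (Fin K) (Fin K) ℂ))) ⊗ₖ
        (Matrix.of fun b b' : Bt => ∑ r, ∑ a, ψ (r, a, b) * conj (ψ (r, a, b'))))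
      ((((L : ℂ)⁻¹ • (1 : Matrix (Fin L) (Fin L) ℂ))) ⊗ₖ
        (Matrix.of fun p q : At × Bt => ∑ r, ψ (r, p.1, p.2) * conj (ψ (r, q.1, q.2))))) :
    Real.logb 2 K - Real.logb 2 L ≥
      Real.logb 2
        (maxEig (Matrix.of fun b b' : Bt => ∑ r, ∑ a, ψ (r, a, b) * conj (ψ (r, a, b'))) * D) := by
  haveI hRne : Nonempty Rt := by
    by_contra h
    haveI : IsEmpty Rt := not_nonempty_iff.mp h
    simp at hunit
  haveI hAne : Nonempty At := by
    by_contra h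
    haveI : IsEmpty At := not_nonempty_iff.mp h
    simp at hunit
  haveI : Nonempty (Fin K) := ⟨⟨0, hK⟩⟩
  haveI : Nonempty (Fin L) := ⟨⟨0, hL⟩⟩
  set M : Matrix Bt Bt ℂ :=
    Matrix.of (fun b b' : Bt => ∑ r, ∑ a, ψ (r, a, b) * conj (ψ (r, a, b'))) with hMdef
  set N : Matrix (At × Bt) (At × Bt) ℂ :=
    Matrix.of (fun p q : At × Bt => ∑ r, ψ (r, p.1, p.2) * conj (ψ (r, q.1, q.2))) with hNdef
  have hM : M.IsHermitian := by
    ext b b'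
    simp only [hMdef, conjTranspose_apply, of_apply, Complex.star_def, map_sum, _root_.map_mul,
      Complex.conj_conj]
    exact Finset.sum_congr rfl fun r _ => Finset.sum_congr rfl fun a _ => by ring
  have hN : N.IsHermitian := by
    ext p q
    simp only [hNdef, conjTranspose_apply, of_apply, Complex.star_def, map_sum, _root_.map_mul,
      Complex.conj_conj]
    exact Finset.sum_congr rfl fun r _ => by ring
  have hcK : conj ((K:ℂ)⁻¹) = (K:ℂ)⁻¹ := by
    rw [map_inv₀, Complex.conj_natCast]
  have hcL : conj ((L:ℂ)⁻¹) = (L:ℂ)⁻¹ := by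
    rw [map_inv₀, Complex.conj_natCast]
  have hA : (((K:ℂ)⁻¹ • (1 : Matrix (Fin K) (Fin K) ℂ)) ⊗ₖ M).IsHermitian := kron_herm hcK hM
  have hB : (((L:ℂ)⁻¹ • (1 : Matrix (Fin L) (Fin L) ℂ)) ⊗ₖ N).IsHermitian := kron_herm hcL hN
  -- entrywise version of hmix
  have hmixE : ∀ r r' : Rt, ∑ q : At × Bt, ψ (r, q.1, q.2) * conj (ψ (r', q.1, q.2))
      = if r = r' then (D:ℂ)⁻¹ else 0 := by
    intro r r'
    have h := congrFun (congrFun hmix r) r'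
    simp only [of_apply, Matrix.smul_apply, Matrix.one_apply, smul_eq_mul] at h
    rw [Fintype.sum_prod_type]
    rw [show (∑ a, ∑ b, ψ (r, a, b) * conj (ψ (r', a, b))) = _ from h]
    by_cases hrr : r = r' <;> simp [hrr]
  -- trace of M is one
  have htr : M.trace = 1 := by
    have h8 : M.trace = ∑ b, ∑ r, ∑ a, ψ (r, a, b) * conj (ψ (r, a, b)) := by
      simp [Matrix.trace, Matrix.diag, hMdef]
    have hunit' : ∑ r, ∑ a, ∑ b, ‖ψ (r, a, b)‖ ^ 2 = 1 := by
      rw [← hunit]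
      simp only [Fintype.sum_prod_type]
    have h9 : ∑ b, ∑ r, ∑ a, ‖ψ (r, a, b)‖ ^ 2 = 1 := by
      calc ∑ b, ∑ r, ∑ a, ‖ψ (r, a, b)‖ ^ 2
          = ∑ r, ∑ b, ∑ a, ‖ψ (r, a, b)‖ ^ 2 := Finset.sum_comm
        _ = ∑ r, ∑ a, ∑ b, ‖ψ (r, a, b)‖ ^ 2 :=
            Finset.sum_congr rfl fun r _ => Finset.sum_comm
        _ = 1 := hunit'
    rw [h8]
    calc ∑ b, ∑ r, ∑ a, ψ (r, a, b) * conj (ψ (r, a, b))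
        = ∑ b, ∑ r, ∑ a, ((‖ψ (r, a, b)‖ ^ 2 : ℝ) : ℂ) := by
          refine Finset.sum_congr rfl fun b _ => Finset.sum_congr rfl fun r _ =>
            Finset.sum_congr rfl fun a _ => ?_
          rw [Complex.mul_conj, Complex.sq_norm]
      _ = ((∑ b, ∑ r, ∑ a, ‖ψ (r, a, b)‖ ^ 2 : ℝ) : ℂ) := by push_cast; rfl
      _ = 1 := by rw [h9]; norm_num
  have hsum1 : ∑ i, hM.eigenvalues i = 1 := by
    rw [sum_eig_eq_trace_re hM, htr, Complex.one_re]
  have hpos : 0 < maxEig M := by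
    by_contra h
    push_neg at h
    have h2 : ∑ i, hM.eigenvalues i ≤ 0 :=
      Finset.sum_nonpos fun i _ => (eig_le_maxEig hM i).trans h
    rw [hsum1] at h2; linarith
  -- key1 : K⁻¹ * maxEig M ≤ topSum A 1
  obtain ⟨i0, hi0⟩ := Finite.exists_max (fun i => hM.eigenvalues i)
  have hmax : maxEig M = hM.eigenvalues i0 :=
    le_antisymm (by rw [maxEig_eq hM]; exact ciSup_le hi0) (eig_le_maxEig hM i0)
  set v : Bt → ℂ := ⇑(hM.eigenvectorBasis i0) with hv
  have hvdot : star v ⬝ᵥ v = 1 := by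
    have h1 : (inner ℂ (hM.eigenvectorBasis i0) (hM.eigenvectorBasis i0) : ℂ) = star v ⬝ᵥ v :=
      (EuclideanSpace.inner_eq_star_dotProduct _ _).trans (dotProduct_comm _ _)
    rw [← h1, inner_self_eq_norm_sq_to_K, hM.eigenvectorBasis.orthonormal.1 i0]
    norm_num
  have hquadv : (star v ⬝ᵥ (M *ᵥ v)).re = hM.eigenvalues i0 := by
    have h := hM.eigenvalues_eq i0
    rw [h]; rfl
  set x : Fin K × Bt → ℂ := fun p => if p.1 = (⟨0, hK⟩ : Fin K) then v p.2 else 0 with hx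
  have hsli : ∀ j : Fin K, j ≠ ⟨0, hK⟩ → (fun b => x (j, b)) = (0 : Bt → ℂ) := by
    intro j hj; funext b; simp [hx, hj]
  have hsli0 : (fun b => x ((⟨0, hK⟩ : Fin K), b)) = v := by
    funext b; simp [hx]
  have hterm1 : ∀ j : Fin K, (star (fun b => x (j, b)) ⬝ᵥ (M *ᵥ (fun b => x (j, b))))
      = if j = ⟨0, hK⟩ then star v ⬝ᵥ (M *ᵥ v) else 0 := by
    intro j
    by_cases h : j = ⟨0, hK⟩
    · subst h; rw [if_pos rfl, hsli0]
    · rw [if_neg h, hsli j h]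
      simp [dotProduct]
  have hterm1' : ∀ j : Fin K, (star (fun b => x (j, b)) ⬝ᵥ (fun b => x (j, b)))
      = if j = ⟨0, hK⟩ then (1:ℂ) else 0 := by
    intro j
    by_cases h : j = ⟨0, hK⟩
    · subst h; rw [if_pos rfl, hsli0, hvdot]
    · rw [if_neg h, hsli j h]
      simp [dotProduct]
  have hxquad : star x ⬝ᵥ ((((K:ℂ)⁻¹ • (1 : Matrix (Fin K) (Fin K) ℂ)) ⊗ₖ M) *ᵥ x)
      = (K:ℂ)⁻¹ * (star v ⬝ᵥ (M *ᵥ v)) := by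
    rw [kron_quad, Finset.sum_congr rfl fun j _ => hterm1 j, Finset.sum_ite_eq',
      if_pos (Finset.mem_univ _)]
  have hxnorm : (star x ⬝ᵥ x) = 1 := by
    rw [dot_split, Finset.sum_congr rfl fun j _ => hterm1' j, Finset.sum_ite_eq',
      if_pos (Finset.mem_univ _)]
  have key1 : (K:ℝ)⁻¹ * maxEig M
      ≤ topSum (((K:ℂ)⁻¹ • (1 : Matrix (Fin K) (Fin K) ℂ)) ⊗ₖ M) 1 := by
    have h4 := quad_le_maxEig hA x
    rw [hxquad, hxnorm] at h4
    have h5 : ((K:ℂ)⁻¹ * (star v ⬝ᵥ (M *ᵥ v))).re = (K:ℝ)⁻¹ * hM.eigenvalues i0 := by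
      have hc : ((K:ℂ))⁻¹ = (((K:ℝ)⁻¹ : ℝ) : ℂ) := by push_cast; ring
      rw [hc, Complex.re_ofReal_mul, hquadv]
    rw [h5, Complex.one_re, mul_one] at h4
    rw [hmax]
    exact h4.trans (maxEig_le_topSum hA)
  -- key2 : topSum B 1 ≤ L⁻¹ D⁻¹
  have key2 : topSum (((L:ℂ)⁻¹ • (1 : Matrix (Fin L) (Fin L) ℂ)) ⊗ₖ N) 1
      ≤ (L:ℝ)⁻¹ * (D:ℝ)⁻¹ := by
    apply topSum_one_le hB
    intro i
    set w : Fin L × (At × Bt) → ℂ := ⇑(hB.eigenvectorBasis i) with hw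
    have hwdot : star w ⬝ᵥ w = 1 := by
      have h1 : (inner ℂ (hB.eigenvectorBasis i) (hB.eigenvectorBasis i) : ℂ) = star w ⬝ᵥ w :=
        (EuclideanSpace.inner_eq_star_dotProduct _ _).trans (dotProduct_comm _ _)
      rw [← h1, inner_self_eq_norm_sq_to_K, hB.eigenvectorBasis.orthonormal.1 i]
      norm_num
    have he : hB.eigenvalues i
        = (star w ⬝ᵥ ((((L:ℂ)⁻¹ • (1 : Matrix (Fin L) (Fin L) ℂ)) ⊗ₖ N) *ᵥ w)).re := by
      have h := hB.eigenvalues_eq i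
      rw [h]; rfl
    have hq : star w ⬝ᵥ ((((L:ℂ)⁻¹ • (1 : Matrix (Fin L) (Fin L) ℂ)) ⊗ₖ N) *ᵥ w)
        = (((L:ℝ)⁻¹ : ℝ) : ℂ) * ∑ j, (star (fun p => w (j, p)) ⬝ᵥ (N *ᵥ (fun p => w (j, p)))) := by
      rw [kron_quad]
      congr 1
      push_cast
      ring
    have hterm : ∀ j : Fin L, (star (fun p => w (j, p)) ⬝ᵥ (N *ᵥ (fun p => w (j, p)))).re
        ≤ (D:ℝ)⁻¹ * (star (fun p => w (j, p)) ⬝ᵥ (fun p => w (j, p))).re := by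
      intro j
      have hmixE' : ∀ r r' : Rt, ∑ q : At × Bt, ψ (r, q.1, q.2) * conj (ψ (r', q.1, q.2))
          = @ite ℂ (r = r') (Classical.propDecidable (r = r')) ((D:ℂ)⁻¹) 0 := by
        intro r r'
        rw [hmixE r r']
        by_cases h : r = r' <;> simp [h]
      have h := quadN_le (fun r p => ψ (r, p.1, p.2)) D hDpos hmixE' (fun p => w (j, p))
      rw [hNdef]
      exact h
    rw [he, hq, Complex.re_ofReal_mul, Complex.re_sum]
    have hsumle : (∑ j, (star (fun p => w (j, p)) ⬝ᵥ (N *ᵥ (fun p => w (j, p)))).re)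
        ≤ (D:ℝ)⁻¹ := by
      calc (∑ j, (star (fun p => w (j, p)) ⬝ᵥ (N *ᵥ (fun p => w (j, p)))).re)
          ≤ ∑ j, (D:ℝ)⁻¹ * (star (fun p => w (j, p)) ⬝ᵥ (fun p => w (j, p))).re :=
            Finset.sum_le_sum fun j _ => hterm j
        _ = (D:ℝ)⁻¹ * (star w ⬝ᵥ w).re := by
            rw [← Finset.mul_sum, dot_split, Complex.re_sum]
        _ = (D:ℝ)⁻¹ := by rw [hwdot, Complex.one_re, mul_one]
    exact mul_le_mul_of_nonneg_left hsumle (by positivity)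
  -- combine
  have hchain : (K:ℝ)⁻¹ * maxEig M ≤ (L:ℝ)⁻¹ * (D:ℝ)⁻¹ := key1.trans ((hmaj.1 1).trans key2)
  have hKpos : (0:ℝ) < K := by exact_mod_cast hK
  have hLpos : (0:ℝ) < L := by exact_mod_cast hL
  have hDpos' : (0:ℝ) < D := by exact_mod_cast hDpos
  have hfrac : maxEig M * D ≤ (K:ℝ) / (L:ℝ) := by
    rw [div_eq_mul_inv]
    have h7 := mul_le_mul_of_nonneg_right
      (mul_le_mul_of_nonneg_left hchain hKpos.le) hDpos'.le
    calc maxEig M * D = ((K:ℝ) * ((K:ℝ)⁻¹ * maxEig M)) * D := by field_simp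
      _ ≤ ((K:ℝ) * ((L:ℝ)⁻¹ * (D:ℝ)⁻¹)) * D := h7
      _ = (K:ℝ) * (L:ℝ)⁻¹ := by field_simp
  rw [ge_iff_le, ← Real.logb_div hKpos.ne' hLpos.ne']
  exact Real.logb_le_logb_of_le (by norm_num) (mul_pos hpos hDpos') hfrac
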